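/- Let γ_1^1,…,γ_1^{n_1} be a Clifford family on a complex vector space H_1 with n_1 even, χ ∈ End(H_1) with χ² = id and χ γ_1^a = −γ_1^a χ for all a, and let γ_2^1,…,γ_2^{n_2} be a Clifford family on H_2 with n_2 even. Set P_1 = γ_1^1⋯γ_1^{n_1}, P_2 = γ_2^1⋯γ_2^{n_2}, and let P be the ordered product of the combined Clifford family (iγ_1^1 ⊗ 1)⋯(iγ_1^{n_1} ⊗ 1)(χ ⊗ γ_2^1)⋯(χ ⊗ γ_2^{n_2}) on H_1 ⊗ H_2. Then P = (−1)^{n_1/2} P_1 ⊗ P_2. Moreover, with V = (1/√2)(1 + iχ), one has (V ⊗ 1) P (V ⊗ 1)^{−1} = P. -/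
import Mathlib


open TensorProduct

section Aux

variable {R M N : Type*} [CommRing R] [AddCommGroup M] [Module R M]
  [AddCommGroup N] [Module R N]

private lemma tmap_list {ι : Type*} (l : List ι) (f : ι → Module.End R M)
    (g : ι → Module.End R N) :
    (l.map fun x => TensorProduct.map (f x) (g x)).prod
      = TensorProduct.map ((l.map f).prod) ((l.map g).prod) := by
  induction l with
  | nil => simp [TensorProduct.map_one]
  | cons a t ih => simp [ih, TensorProduct.map_mul]

private lemma smul_list {ι : Type*} (l : List ι) (c : R) (f : ι → Module.End R M) :
    (l.map fun x => c • f x).prod = c ^ l.length • (l.map f).prod := by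
  induction l with
  | nil => simp
  | cons a t ih =>
    simp only [List.map_cons, List.prod_cons, ih, List.length_cons, pow_succ]
    rw [smul_mul_assoc, mul_smul_comm, smul_smul, mul_comm]

private lemma chi_comm (χ : Module.End R M) {ι : Type*} (γ : ι → Module.End R M)
    (hχγ : ∀ a, χ * γ a = -(γ a * χ)) (l : List ι) :
    χ * (l.map γ).prod = ((-1 : R) ^ l.length) • ((l.map γ).prod * χ) := by
  induction l with
  | nil => simp
  | cons a t ih =>
    simp only [List.map_cons, List.prod_cons, List.length_cons, pow_succ]
    rw [← mul_assoc, hχγ a, neg_mul, mul_assoc, ih, mul_smul_comm, ← mul_assoc,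
      ← neg_smul]
    ring_nf

end Aux

/-- for the combined Clifford family `(iγ₁^a ⊗ 1, χ ⊗ γ₂^α)` with `n₁ = 2m₁`
and `n₂ = 2m₂` both even, the ordered product `P` of all the combined gamma matrices equals
`(−1)^{n₁/2} P₁ ⊗ P₂`, and it is fixed by conjugation with `V ⊗ 1`, `V = (1/√2)(1 + iχ)`. -/
theorem combined_P_even_even
    {H₁ H₂ : Type*} [AddCommGroup H₁] [Module ℂ H₁] [AddCommGroup H₂] [Module ℂ H₂]
    {m₁ m₂ : ℕ}
    (γ₁ : Fin (2 * m₁) → Module.End ℂ H₁) (η₁ : Fin (2 * m₁) → ℂ)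
    (γ₂ : Fin (2 * m₂) → Module.End ℂ H₂) (η₂ : Fin (2 * m₂) → ℂ)
    (hη₁ : ∀ a, η₁ a = 1 ∨ η₁ a = -1)
    (hη₂ : ∀ α, η₂ α = 1 ∨ η₂ α = -1)
    (hcl₁ : ∀ a b, γ₁ a * γ₁ b + γ₁ b * γ₁ a
      = (2 * η₁ a * (if a = b then 1 else 0)) • (1 : Module.End ℂ H₁))
    (hcl₂ : ∀ α β, γ₂ α * γ₂ β + γ₂ β * γ₂ α
      = (2 * η₂ α * (if α = β then 1 else 0)) • (1 : Module.End ℂ H₂))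
    (χ : Module.End ℂ H₁)
    (hχsq : χ * χ = 1)
    (hχγ : ∀ a, χ * γ₁ a = -(γ₁ a * χ))
    (P₁ : Module.End ℂ H₁) (hP₁ : P₁ = ((List.finRange (2 * m₁)).map γ₁).prod)
    (P₂ : Module.End ℂ H₂) (hP₂ : P₂ = ((List.finRange (2 * m₂)).map γ₂).prod)
    (P : Module.End ℂ (H₁ ⊗[ℂ] H₂))
    (hP : P = (((List.finRange (2 * m₁)).map fun a =>
          TensorProduct.map (Complex.I • γ₁ a) (1 : Module.End ℂ H₂))
        ++ ((List.finRange (2 * m₂)).map fun α => TensorProduct.map χ (γ₂ α))).prod)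
    (V W : Module.End ℂ H₁)
    (hV : V = ((Real.sqrt 2 : ℂ))⁻¹ • ((1 : Module.End ℂ H₁) + Complex.I • χ))
    (hW : W = ((Real.sqrt 2 : ℂ))⁻¹ • ((1 : Module.End ℂ H₁) - Complex.I • χ)) :
    P = ((-1 : ℂ) ^ m₁) • TensorProduct.map P₁ P₂
    ∧ TensorProduct.map V (1 : Module.End ℂ H₂) * P * TensorProduct.map W (1 : Module.End ℂ H₂)
        = P := by
  -- first list product
  have h1 : ((List.finRange (2 * m₁)).map fun a =>
      TensorProduct.map (Complex.I • γ₁ a) (1 : Module.End ℂ H₂)).prod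
      = TensorProduct.map (((-1 : ℂ) ^ m₁) • P₁) 1 := by
    rw [tmap_list (List.finRange (2 * m₁)) (fun a => Complex.I • γ₁ a)
      (fun _ => (1 : Module.End ℂ H₂))]
    rw [smul_list, hP₁]
    congr 1
    · rw [List.length_finRange, pow_mul, Complex.I_sq]
    · simp
  -- second list product
  have h2 : ((List.finRange (2 * m₂)).map fun α =>
      TensorProduct.map χ (γ₂ α)).prod = TensorProduct.map 1 P₂ := by
    rw [tmap_list (List.finRange (2 * m₂)) (fun _ => χ) γ₂, hP₂]
    congr 1
    rw [List.map_const', List.prod_replicate, List.length_finRange, pow_mul,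
      sq, hχsq, one_pow]
  have hPeq : P = ((-1 : ℂ) ^ m₁) • TensorProduct.map P₁ P₂ := by
    rw [hP, List.prod_append, h1, h2, TensorProduct.map_smul_left, smul_mul_assoc,
      ← TensorProduct.map_mul, one_mul, mul_one]
  refine ⟨hPeq, ?_⟩
  -- χ commutes with P₁
  have hχP₁ : χ * P₁ = P₁ * χ := by
    rw [hP₁, chi_comm χ γ₁ hχγ, List.length_finRange, pow_mul]
    norm_num
  -- V * P₁ * W = P₁
  have hc : ((Real.sqrt 2 : ℂ))⁻¹ * ((Real.sqrt 2 : ℂ))⁻¹ * 2 = 1 := by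
    rw [← mul_inv]
    have : ((Real.sqrt 2 : ℂ)) * ((Real.sqrt 2 : ℂ)) = 2 := by
      rw [← Complex.ofReal_mul, Real.mul_self_sqrt (by norm_num)]
      norm_num
    rw [this]
    norm_num
  have key : V * P₁ * W = P₁ := by
    rw [hV, hW, smul_mul_assoc, smul_mul_assoc, mul_smul_comm, smul_smul]
    have hcomm : ((1 : Module.End ℂ H₁) + Complex.I • χ) * P₁
        = P₁ * ((1 : Module.End ℂ H₁) + Complex.I • χ) := by
      rw [add_mul, mul_add, one_mul, mul_one, smul_mul_assoc, mul_smul_comm, hχP₁]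
    rw [hcomm, mul_assoc]
    have hprod : ((1 : Module.End ℂ H₁) + Complex.I • χ)
        * ((1 : Module.End ℂ H₁) - Complex.I • χ) = (2 : ℂ) • 1 := by
      rw [mul_sub, add_mul, add_mul, one_mul, mul_one, smul_mul_smul_comm,
        Complex.I_mul_I, hχsq]
      have : (-1 : ℂ) • (1 : Module.End ℂ H₁) = -1 := by simp
      rw [this]
      abel_nf
      rw [two_smul]
      simp [two_smul]
    rw [hprod, mul_smul_comm, mul_one, smul_smul, hc, one_smul]
  rw [hPeq, mul_smul_comm, smul_mul_assoc]
  congr 1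
  rw [← TensorProduct.map_mul, ← TensorProduct.map_mul, key, one_mul, mul_one]
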